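/- arXiv:2407.14422 — 2 statements merged into one kernel-verified Lean document; each statement's English description precedes it below -/
import Mathlib

section
/- Let W be a graphon and assume there exist η > 0 and intervals J_1, J_2 ⊆ [0,1], each of length ℓ with 0 < ℓ ≤ 1, such that W(x,y) ≥ η for all (x,y) ∈ J_1 × J_2. Let N ≥ 1 and let U_1, …, U_N be independent random variables, each uniformly distributed on [0,1], and define d̄_{(N)} = max_{1≤i≤N} Σ_{j=1}^N W(U_i, U_j). Then P[ d̄_{(N)} ≥ η N ℓ / 4 ] ≥ (1 − exp(−N ℓ²/4)) · (1 − (1−ℓ)^{⌊N/2⌋}). -/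
open MeasureTheory ProbabilityTheory

section Aux
open Real


lemma bernoulli_mgf_aux (p : ℝ) (hp0 : 0 ≤ p) (hp1 : p ≤ 1) (t : ℝ) :
    1 - p + p * exp t ≤ exp (t * p + t ^ 2 / 8) := by
  have hg : ∀ x : ℝ, 0 < 1 - p + p * exp x := by
    intro x
    rcases eq_or_lt_of_le hp0 with h | h
    · simp [← h]
    · nlinarith [exp_pos x, mul_pos h (exp_pos x)]
  set f : ℝ → ℝ := fun x => x * p + x ^ 2 / 8 - log (1 - p + p * exp x) with hf
  set f' : ℝ → ℝ := fun x => p + x / 4 - p * exp x / (1 - p + p * exp x) with hf'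
  have hgder : ∀ x : ℝ, HasDerivAt (fun x => 1 - p + p * exp x) (p * exp x) x := by
    intro x
    exact ((hasDerivAt_exp x).const_mul p).const_add (1 - p)
  have hder : ∀ x : ℝ, HasDerivAt f (f' x) x := by
    intro x
    have h2 : HasDerivAt (fun x => log (1 - p + p * exp x))
        (p * exp x / (1 - p + p * exp x)) x := (hgder x).log (hg x).ne'
    have h3 : HasDerivAt (fun x : ℝ => x * p + x ^ 2 / 8) (p + x / 4) x := by
      have := ((hasDerivAt_id x).mul_const p).add ((hasDerivAt_pow 2 x).div_const 8)
      refine this.congr_deriv ?_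
      simp; ring
    exact h3.sub h2
  have hder' : ∀ x : ℝ, HasDerivAt f'
      (1/4 - (p * exp x * (1 - p + p * exp x) - p * exp x * (p * exp x)) /
        (1 - p + p * exp x) ^ 2) x := by
    intro x
    have h4 : HasDerivAt (fun x => p * exp x / (1 - p + p * exp x))
        ((p * exp x * (1 - p + p * exp x) - p * exp x * (p * exp x)) /
          (1 - p + p * exp x) ^ 2) x :=
      ((hasDerivAt_exp x).const_mul p).div (hgder x) (hg x).ne'
    have h5 : HasDerivAt (fun x : ℝ => p + x / 4) (1/4) x := by
      simpa using ((hasDerivAt_id x).div_const 4).const_add p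
    exact h5.sub h4
  have hsec : ∀ x : ℝ, 0 ≤ 1/4 - (p * exp x * (1 - p + p * exp x) - p * exp x * (p * exp x)) /
        (1 - p + p * exp x) ^ 2 := by
    intro x
    set u := p * exp x with hu
    set v := 1 - p + p * exp x with hv
    have hu0 : 0 ≤ u := mul_nonneg hp0 (exp_pos x).le
    have hv0 : 0 < v := hg x
    have huv : u ≤ v := by simp [hu, hv]; linarith
    have : (u * v - u * u) / v ^ 2 ≤ 1/4 := by
      rw [div_le_iff₀ (by positivity)]
      nlinarith [sq_nonneg (v - 2 * u)]
    linarith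
  have hmono : Monotone f' := by
    apply monotone_of_deriv_nonneg (fun x => (hder' x).differentiableAt)
    intro x
    rw [(hder' x).deriv]
    exact hsec x
  have hf'0 : f' 0 = 0 := by
    simp [hf']
  have hf0 : f 0 = 0 := by simp [hf]
  have hfnonneg : 0 ≤ f t := by
    rcases le_total 0 t with h | h
    · have : MonotoneOn f (Set.Ici 0) := by
        apply monotoneOn_of_deriv_nonneg (convex_Ici 0)
          (fun x _ => ((hder x).differentiableAt.continuousAt).continuousWithinAt)
          (fun x _ => (hder x).differentiableAt.differentiableWithinAt)
        intro x hx
        rw [(hder x).deriv]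
        rw [interior_Ici] at hx
        have := hmono (le_of_lt hx)
        rw [hf'0] at this
        exact this
      have := this Set.self_mem_Ici (Set.mem_Ici.2 h) h
      rwa [hf0] at this
    · have : AntitoneOn f (Set.Iic 0) := by
        apply antitoneOn_of_deriv_nonpos (convex_Iic 0)
          (fun x _ => ((hder x).differentiableAt.continuousAt).continuousWithinAt)
          (fun x _ => (hder x).differentiableAt.differentiableWithinAt)
        intro x hx
        rw [(hder x).deriv]
        rw [interior_Iic] at hx
        have := hmono (le_of_lt hx)
        rw [hf'0] at this
        exact this
      have := this (Set.mem_Iic.2 h) Set.self_mem_Iic h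
      rwa [hf0] at this
  have hlog : log (1 - p + p * exp t) ≤ t * p + t ^ 2 / 8 := by
    have : 0 ≤ t * p + t ^ 2 / 8 - log (1 - p + p * exp t) := hfnonneg
    linarith
  calc 1 - p + p * exp t = exp (log (1 - p + p * exp t)) := (exp_log (hg t)).symm
    _ ≤ exp (t * p + t ^ 2 / 8) := exp_le_exp.2 hlog

end Aux

section Aux2
open MeasureTheory ProbabilityTheory Real

lemma mgf_centered_indicator {Ω : Type} [MeasurableSpace Ω] (P : Measure Ω)
    [IsProbabilityMeasure P] {A : Set Ω} (hA : MeasurableSet A) (p t : ℝ)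
    (hp0 : 0 ≤ p) (hp1 : p ≤ 1) (hPA : P A = ENNReal.ofReal p) :
    mgf (fun ω => A.indicator (fun _ => (1 : ℝ)) ω - p) P t ≤ exp (t ^ 2 / 8) := by
  have hPA' : (P A).toReal = p := by rw [hPA, ENNReal.toReal_ofReal hp0]
  have heq : (fun ω => exp (t * (A.indicator (fun _ => (1 : ℝ)) ω - p))) =
      fun ω => A.indicator (fun _ => exp (t * (1 - p)) - exp (t * (-p))) ω + exp (t * (-p)) := by
    ext ω; by_cases h : ω ∈ A <;> simp [Set.indicator, h] <;> ring_nf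
  rw [mgf, heq, integral_add ((integrable_const _).indicator hA) (integrable_const _),
    integral_indicator_const _ hA, integral_const, probReal_univ]
  simp only [Measure.real, hPA', ENNReal.toReal_one, smul_eq_mul, one_mul]
  have key : (1 - p + p * exp t) * exp (t * (-p)) ≤ exp (t ^ 2 / 8) := by
    rw [show t ^ 2 / 8 = (t * p + t ^ 2 / 8) + t * (-p) by ring, exp_add]
    exact mul_le_mul_of_nonneg_right (bernoulli_mgf_aux p hp0 hp1 t) (exp_pos _).le
  have h1 : exp (t * (1 - p)) = exp t * exp (t * (-p)) := by
    rw [← exp_add]; ring_nf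
  nlinarith [exp_pos (t * (-p)), exp_pos t]

end Aux2

/-- If a graphon `W` satisfies `W ≥ η` on a product of two intervals
`J₁ × J₂ ⊆ [0,1]²` of length `ℓ`, then the maximal expected degree `d̄_{(N)}` of the weighted
graph built from `N` i.i.d. uniform latent variables satisfies
`P[d̄_{(N)} ≥ ηNℓ/4] ≥ (1 - e^{-Nℓ²/4})(1 - (1-ℓ)^⌊N/2⌋)`. -/
theorem max_expected_degree_lower_bound_prob
    -- `W` is a graphon: symmetric, measurable, with values in `[0,1]` on the unit square
    (W : ℝ → ℝ → ℝ)
    (hWmeas : Measurable (Function.uncurry W))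
    (hWsymm : ∀ x y, W x y = W y x)
    (hWrange : ∀ x ∈ Set.Icc (0 : ℝ) 1, ∀ y ∈ Set.Icc (0 : ℝ) 1,
      W x y ∈ Set.Icc (0 : ℝ) 1)
    -- the rectangle `J₁ × J₂` on which `W ≥ η`, with intervals of length `ℓ`
    (η ℓ a₁ a₂ : ℝ) (hη : 0 < η) (hℓ : 0 < ℓ) (hℓ1 : ℓ ≤ 1)
    (hJ₁ : Set.Icc a₁ (a₁ + ℓ) ⊆ Set.Icc (0 : ℝ) 1)
    (hJ₂ : Set.Icc a₂ (a₂ + ℓ) ⊆ Set.Icc (0 : ℝ) 1)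
    (hWη : ∀ x ∈ Set.Icc a₁ (a₁ + ℓ), ∀ y ∈ Set.Icc a₂ (a₂ + ℓ), η ≤ W x y)
    -- the i.i.d. uniform latent variables
    (N : ℕ) (hN : 1 ≤ N)
    {Ω : Type} [MeasurableSpace Ω] (P : Measure Ω) [IsProbabilityMeasure P]
    (U : Fin N → Ω → ℝ)
    (hUmeas : ∀ i, Measurable (U i))
    (hUindep : iIndepFun U P)
    (hUlaw : ∀ i, Measure.map (U i) P = volume.restrict (Set.Icc (0 : ℝ) 1)) :
    ENNReal.ofReal ((1 - Real.exp (-(N * ℓ ^ 2) / 4)) * (1 - (1 - ℓ) ^ (N / 2))) ≤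
      P {ω | η * N * ℓ / 4 ≤ ⨆ i : Fin N, ∑ j : Fin N, W (U i ω) (U j ω)} := by
  classical
  set J₁' : Set ℝ := Set.Icc a₁ (a₁ + ℓ) with hJ₁def
  set J₂' : Set ℝ := Set.Icc a₂ (a₂ + ℓ) with hJ₂def
  -- law of preimages
  have hPA : ∀ (i : Fin N) (B : Set ℝ), MeasurableSet B →
      P (U i ⁻¹' B) = volume.restrict (Set.Icc (0 : ℝ) 1) B := by
    intro i B hB
    rw [← hUlaw i, Measure.map_apply (hUmeas i) hB]
  have hP₁ : ∀ i : Fin N, P (U i ⁻¹' J₁') = ENNReal.ofReal ℓ := by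
    intro i
    rw [hPA i _ measurableSet_Icc, Measure.restrict_apply measurableSet_Icc,
      Set.inter_eq_self_of_subset_left hJ₁, Real.volume_Icc]
    congr 1; ring
  have hP₂ : ∀ i : Fin N, P (U i ⁻¹' J₂') = ENNReal.ofReal ℓ := by
    intro i
    rw [hPA i _ measurableSet_Icc, Measure.restrict_apply measurableSet_Icc,
      Set.inter_eq_self_of_subset_left hJ₂, Real.volume_Icc]
    congr 1; ring
  -- index sets
  set S : Finset (Fin N) := (Finset.range (N / 2)).attachFin
    (fun m hm => lt_of_lt_of_le (Finset.mem_range.1 hm) (Nat.div_le_self N 2)) with hSdef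
  set T : Finset (Fin N) := Sᶜ with hTdef
  have hScard : S.card = N / 2 := by
    rw [hSdef, Finset.card_attachFin, Finset.card_range]
  have hTcard : T.card = N - N / 2 := by
    rw [hTdef, Finset.card_compl, hScard, Fintype.card_fin]
  set m : ℕ := N - N / 2 with hmdef
  have hm1 : 1 ≤ m := by omega
  have hm2 : N ≤ 2 * m := by omega
  -- the indicator variables
  set φ : ℝ → ℝ := fun x => J₂'.indicator (fun _ => (1 : ℝ)) x - ℓ with hφdef
  have hφmeas : Measurable φ :=
    (measurable_one.indicator measurableSet_Icc).sub measurable_const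
  set X : Fin N → Ω → ℝ := fun j => φ ∘ U j with hXdef
  have hXmeas : ∀ j, Measurable (X j) := fun j => hφmeas.comp (hUmeas j)
  have hXindep : iIndepFun X P :=
    hUindep.comp (fun _ => φ) (fun _ => hφmeas)
  -- mgf bound for each X j
  have hXmgf : ∀ (j : Fin N) (t : ℝ), mgf (X j) P t ≤ Real.exp (t ^ 2 / 8) := by
    intro j t
    have : X j = fun ω => (U j ⁻¹' J₂').indicator (fun _ => (1 : ℝ)) ω - ℓ := by
      ext ω
      simp only [hXdef, Function.comp_apply, hφdef, Set.indicator]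
      by_cases h : U j ω ∈ J₂' <;> simp [h]
    rw [this]
    exact mgf_centered_indicator P ((hUmeas j) measurableSet_Icc) ℓ t hℓ.le hℓ1 (hP₂ j)
  have hXbdd : ∀ (j : Fin N) (ω : Ω), |X j ω| ≤ 1 := by
    intro j ω
    simp only [hXdef, Function.comp_apply, hφdef, Set.indicator]
    rw [abs_le]
    by_cases h : U j ω ∈ J₂' <;> simp [h] <;> constructor <;> linarith
  have hXint : ∀ (j : Fin N) (t : ℝ), Integrable (fun ω => Real.exp (t * X j ω)) P := by
    intro j t
    refine Integrable.mono' (integrable_const (Real.exp |t|))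
      (((hXmeas j).const_mul t).exp.aestronglyMeasurable) (Filter.Eventually.of_forall fun ω => ?_)
    rw [Real.norm_eq_abs, Real.abs_exp, Real.exp_le_exp]
    calc t * X j ω ≤ |t * X j ω| := le_abs_self _
      _ = |t| * |X j ω| := abs_mul _ _
      _ ≤ |t| * 1 := by gcongr; exact hXbdd j ω
      _ = |t| := mul_one _
  -- the count variable and event E₂
  set Y : Ω → ℝ := fun ω => ∑ j ∈ T, J₂'.indicator (fun _ => (1 : ℝ)) (U j ω) with hYdef
  have hYmeas : Measurable Y := Finset.measurable_sum _ fun j _ =>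
    (measurable_one.indicator measurableSet_Icc).comp (hUmeas j)
  set E₂ : Set Ω := {ω | (N : ℝ) * ℓ / 4 ≤ Y ω} with hE₂def
  have hE₂meas : MeasurableSet E₂ := measurableSet_le measurable_const hYmeas
  set s : ℝ := ℓ * ((m : ℝ) - (N : ℝ) / 4) with hsdef
  have hmr1 : (1 : ℝ) ≤ (m : ℝ) := by exact_mod_cast hm1
  have hmr2 : (N : ℝ) ≤ 2 * (m : ℝ) := by exact_mod_cast hm2
  have hmne : (m : ℝ) ≠ 0 := by linarith
  have hs0 : 0 < s := by
    rw [hsdef]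
    apply mul_pos hℓ
    linarith
  set t₀ : ℝ := -(4 * s) / m with ht₀def
  have ht₀ : t₀ ≤ 0 := by
    rw [ht₀def]
    apply div_nonpos_of_nonpos_of_nonneg <;> linarith
  have hsumX : ∀ ω, (∑ j ∈ T, X j) ω = Y ω - m * ℓ := by
    intro ω
    simp only [Finset.sum_apply, hXdef, Function.comp_apply, hφdef, hYdef]
    rw [Finset.sum_sub_distrib, Finset.sum_const, hTcard, nsmul_eq_mul]
  have hcher : (P {ω | (∑ j ∈ T, X j) ω ≤ (N : ℝ) * ℓ / 4 - m * ℓ}).toReal ≤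
      Real.exp (-((N : ℝ) * ℓ ^ 2) / 4) := by
    have h1 := measure_le_le_exp_mul_mgf (μ := P) (X := ∑ j ∈ T, X j)
      ((N : ℝ) * ℓ / 4 - m * ℓ) ht₀
      (hXindep.integrable_exp_mul_sum hXmeas (fun i _ => hXint i t₀))
    have h2 : mgf (∑ j ∈ T, X j) P t₀ ≤ Real.exp ((m : ℝ) * (t₀ ^ 2 / 8)) := by
      rw [hXindep.mgf_sum hXmeas T]
      calc ∏ j ∈ T, mgf (X j) P t₀ ≤ ∏ j ∈ T, Real.exp (t₀ ^ 2 / 8) :=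
          Finset.prod_le_prod (fun j _ => mgf_nonneg) (fun j _ => hXmgf j t₀)
        _ = Real.exp (t₀ ^ 2 / 8) ^ T.card := Finset.prod_const _
        _ = Real.exp ((m : ℝ) * (t₀ ^ 2 / 8)) := by
            rw [← Real.exp_nat_mul, hTcard]
    have key : (N : ℝ) * ℓ ^ 2 * m ≤ 8 * s ^ 2 := by
      have hf1 : (0 : ℝ) ≤ 2 * (m : ℝ) - N := by linarith
      have hf2 : (0 : ℝ) ≤ 4 * (m : ℝ) - N / 2 := by linarith
      nlinarith [mul_nonneg (mul_nonneg hf1 hf2) (sq_nonneg ℓ)]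
    have hε : (N : ℝ) * ℓ / 4 - m * ℓ = -s := by rw [hsdef]; ring
    have hexp : -t₀ * ((N : ℝ) * ℓ / 4 - m * ℓ) + (m : ℝ) * (t₀ ^ 2 / 8) ≤
        -((N : ℝ) * ℓ ^ 2) / 4 := by
      rw [hε, ht₀def]
      have heq2 : -(-(4 * s) / m) * -s + (m : ℝ) * ((-(4 * s) / m) ^ 2 / 8) =
          -(2 * s ^ 2) / m := by field_simp; ring
      rw [heq2]
      rw [div_le_div_iff₀ (by linarith) (by norm_num : (0:ℝ) < 4)] at *
      nlinarith
    calc (P {ω | (∑ j ∈ T, X j) ω ≤ (N : ℝ) * ℓ / 4 - m * ℓ}).toReal ≤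
        Real.exp (-t₀ * ((N : ℝ) * ℓ / 4 - m * ℓ)) * mgf (∑ j ∈ T, X j) P t₀ := h1
      _ ≤ Real.exp (-t₀ * ((N : ℝ) * ℓ / 4 - m * ℓ)) * Real.exp ((m : ℝ) * (t₀ ^ 2 / 8)) :=
          mul_le_mul_of_nonneg_left h2 (Real.exp_pos _).le
      _ = Real.exp (-t₀ * ((N : ℝ) * ℓ / 4 - m * ℓ) + (m : ℝ) * (t₀ ^ 2 / 8)) :=
          (Real.exp_add _ _).symm
      _ ≤ Real.exp (-((N : ℝ) * ℓ ^ 2) / 4) := Real.exp_le_exp.2 hexp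
  have hE₂c : P E₂ᶜ ≤ ENNReal.ofReal (Real.exp (-((N : ℝ) * ℓ ^ 2) / 4)) := by
    have hsub : E₂ᶜ ⊆ {ω | (∑ j ∈ T, X j) ω ≤ (N : ℝ) * ℓ / 4 - m * ℓ} := by
      intro ω hω
      simp only [hE₂def, Set.mem_compl_iff, Set.mem_setOf_eq, not_le] at hω
      simp only [Set.mem_setOf_eq, hsumX ω]
      linarith
    refine (measure_mono hsub).trans ?_
    rw [← ENNReal.ofReal_toReal (measure_ne_top P _)]
    exact ENNReal.ofReal_le_ofReal hcher
  -- event E₁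
  set E₁ : Set Ω := ⋃ i ∈ S, U i ⁻¹' J₁' with hE₁def
  have hE₁meas : MeasurableSet E₁ :=
    MeasurableSet.biUnion S.countable_toSet fun i _ => (hUmeas i) measurableSet_Icc
  have hE₁c : P E₁ᶜ = ENNReal.ofReal ((1 - ℓ) ^ (N / 2)) := by
    have hcompl : E₁ᶜ = ⋂ i ∈ S, U i ⁻¹' J₁'ᶜ := by
      rw [hE₁def, Set.compl_iUnion₂]
      simp [Set.preimage_compl]
    rw [hcompl, hUindep.measure_inter_preimage_eq_mul S
      (sets := fun _ => J₁'ᶜ) (fun i _ => measurableSet_Icc.compl)]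
    have hone : ∀ i ∈ S, P (U i ⁻¹' J₁'ᶜ) = ENNReal.ofReal (1 - ℓ) := by
      intro i _
      have h1 : ENNReal.ofReal (1 - ℓ) = 1 - ENNReal.ofReal ℓ := by
        rw [ENNReal.ofReal_sub _ hℓ.le, ENNReal.ofReal_one]
      rw [Set.preimage_compl, prob_compl_eq_one_sub ((hUmeas i) measurableSet_Icc),
        hP₁ i, h1]
    rw [Finset.prod_congr rfl hone, Finset.prod_const, hScard,
      ← ENNReal.ofReal_pow (by linarith)]
  have hPE₁ : P E₁ = 1 - ENNReal.ofReal ((1 - ℓ) ^ (N / 2)) := by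
    rw [← compl_compl E₁, prob_compl_eq_one_sub hE₁meas.compl, hE₁c]
  -- independence of E₁ and E₂
  have hIndep12 : P (E₁ ∩ E₂) = P E₁ * P E₂ := by
    have hind := hUindep.indepFun_finset S T disjoint_compl_right hUmeas
    set A₁ : Set (S → ℝ) := ⋃ i : S, (fun x => x i) ⁻¹' J₁' with hA₁def
    have hA₁ : MeasurableSet A₁ :=
      MeasurableSet.iUnion fun i => (measurable_pi_apply i) measurableSet_Icc
    set A₂ : Set (T → ℝ) :=
      {y | (N : ℝ) * ℓ / 4 ≤ ∑ j : T, J₂'.indicator (fun _ => (1 : ℝ)) (y j)} with hA₂def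
    have hA₂ : MeasurableSet A₂ := measurableSet_le measurable_const
      (Finset.measurable_sum Finset.univ fun j _ =>
        (measurable_one.indicator measurableSet_Icc).comp (measurable_pi_apply j))
    have hE₁eq : E₁ = (fun a (i : S) => U i a) ⁻¹' A₁ := by
      ext ω
      simp [hE₁def, hA₁def]
    have hE₂eq : E₂ = (fun a (j : T) => U j a) ⁻¹' A₂ := by
      ext ω
      simp only [hE₂def, hA₂def, Set.mem_setOf_eq, Set.mem_preimage, hYdef]
      rw [Finset.sum_coe_sort T (fun j => J₂'.indicator (fun _ => (1 : ℝ)) (U j ω))]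
    rw [hE₁eq, hE₂eq, hind.measure_inter_preimage_eq_mul A₁ A₂ hA₁ hA₂]
  -- the a.s. event that all U's lie in [0,1]
  set G : Set Ω := ⋂ j, U j ⁻¹' (Set.Icc (0 : ℝ) 1) with hGdef
  have hGc : P Gᶜ = 0 := by
    rw [hGdef, Set.compl_iInter]
    refine measure_iUnion_null fun j => ?_
    rw [prob_compl_eq_one_sub ((hUmeas j) measurableSet_Icc),
      hPA j _ measurableSet_Icc, Measure.restrict_apply measurableSet_Icc,
      Set.inter_self, Real.volume_Icc]
    norm_num
  -- pointwise inclusion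
  have hincl : E₁ ∩ E₂ ∩ G ⊆
      {ω | η * N * ℓ / 4 ≤ ⨆ i : Fin N, ∑ j : Fin N, W (U i ω) (U j ω)} := by
    rintro ω ⟨⟨hω₁, hω₂⟩, hωG⟩
    have hG' : ∀ j, U j ω ∈ Set.Icc (0 : ℝ) 1 := by
      intro j
      have := Set.mem_iInter.1 hωG j
      exact this
    rw [hE₁def, Set.mem_iUnion₂] at hω₁
    obtain ⟨i₀, hi₀S, hi₀⟩ := hω₁
    have hω₂' : (N : ℝ) * ℓ / 4 ≤ Y ω := hω₂
    set F : Finset (Fin N) := T.filter (fun j => U j ω ∈ J₂') with hFdef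
    have hYcard : Y ω = F.card := by
      rw [hYdef, hFdef]
      simp [Set.indicator_apply, Finset.sum_boole]
      convert (Finset.natCast_card_filter _ _).symm
    have key : η * ((N : ℝ) * ℓ / 4) ≤ ∑ j : Fin N, W (U i₀ ω) (U j ω) := by
      have h1 : η * ((N : ℝ) * ℓ / 4) ≤ η * Y ω := mul_le_mul_of_nonneg_left hω₂' hη.le
      have h2 : η * Y ω = ∑ _j ∈ F, η := by
        rw [hYcard, Finset.sum_const, nsmul_eq_mul]; ring
      have h3 : ∑ _j ∈ F, η ≤ ∑ j ∈ F, W (U i₀ ω) (U j ω) :=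
        Finset.sum_le_sum fun j hj => hWη _ hi₀ _ (Finset.mem_filter.1 hj).2
      have h4 : ∑ j ∈ F, W (U i₀ ω) (U j ω) ≤ ∑ j : Fin N, W (U i₀ ω) (U j ω) :=
        Finset.sum_le_sum_of_subset_of_nonneg (Finset.subset_univ F)
          (fun j _ _ => (hWrange _ (hG' i₀) _ (hG' j)).1)
      linarith
    have : η * N * ℓ / 4 ≤ ∑ j : Fin N, W (U i₀ ω) (U j ω) := by
      calc η * N * ℓ / 4 = η * ((N : ℝ) * ℓ / 4) := by ring
        _ ≤ _ := key
    exact this.trans (le_ciSup (f := fun i => ∑ j : Fin N, W (U i ω) (U j ω))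
      (Set.Finite.bddAbove (Set.finite_range _)) i₀)
  -- assembling everything
  have ha1 : Real.exp (-((N : ℝ) * ℓ ^ 2) / 4) ≤ 1 := by
    rw [Real.exp_le_one_iff]
    have : (0 : ℝ) ≤ (N : ℝ) * ℓ ^ 2 := by positivity
    linarith
  have hb1 : (1 - ℓ) ^ (N / 2) ≤ 1 :=
    pow_le_one₀ (by linarith) (by linarith)
  have hb0 : (0 : ℝ) ≤ (1 - ℓ) ^ (N / 2) := pow_nonneg (by linarith) _
  have hPE₂ : ENNReal.ofReal (1 - Real.exp (-((N : ℝ) * ℓ ^ 2) / 4)) ≤ P E₂ := by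
    have h1 : ENNReal.ofReal (1 - Real.exp (-((N : ℝ) * ℓ ^ 2) / 4)) =
        1 - ENNReal.ofReal (Real.exp (-((N : ℝ) * ℓ ^ 2) / 4)) := by
      rw [ENNReal.ofReal_sub _ (Real.exp_pos _).le, ENNReal.ofReal_one]
    have h2 : P E₂ = 1 - P E₂ᶜ := by
      rw [← compl_compl E₂, prob_compl_eq_one_sub hE₂meas.compl, compl_compl]
    rw [h1, h2]
    exact tsub_le_tsub_left hE₂c 1
  have hPE₁' : ENNReal.ofReal (1 - (1 - ℓ) ^ (N / 2)) ≤ P E₁ := by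
    rw [hPE₁, ENNReal.ofReal_sub _ hb0, ENNReal.ofReal_one]
  calc ENNReal.ofReal ((1 - Real.exp (-(N * ℓ ^ 2) / 4)) * (1 - (1 - ℓ) ^ (N / 2)))
      = ENNReal.ofReal (1 - Real.exp (-((N : ℝ) * ℓ ^ 2) / 4)) *
        ENNReal.ofReal (1 - (1 - ℓ) ^ (N / 2)) := ENNReal.ofReal_mul (by linarith)
    _ ≤ P E₂ * P E₁ := mul_le_mul' hPE₂ hPE₁'
    _ = P (E₁ ∩ E₂) := by rw [hIndep12, mul_comm]
    _ ≤ P (E₁ ∩ E₂ ∩ G) := by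
        have hsub : E₁ ∩ E₂ ⊆ (E₁ ∩ E₂ ∩ G) ∪ Gᶜ := by
          intro ω h
          by_cases hg : ω ∈ G
          · exact Or.inl ⟨h, hg⟩
          · exact Or.inr hg
        calc P (E₁ ∩ E₂) ≤ P ((E₁ ∩ E₂ ∩ G) ∪ Gᶜ) := measure_mono hsub
          _ ≤ P (E₁ ∩ E₂ ∩ G) + P Gᶜ := measure_union_le _ _
          _ = P (E₁ ∩ E₂ ∩ G) := by rw [hGc, add_zero]
    _ ≤ P {ω | η * N * ℓ / 4 ≤ ⨆ i : Fin N, ∑ j : Fin N, W (U i ω) (U j ω)} :=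
        measure_mono hincl
end

section
/- Let W be a graphon and assume there exist η > 0 and intervals J_1, J_2 ⊆ [0,1], each of length ℓ with 0 < ℓ ≤ 1, such that W(x,y) ≥ η for all (x,y) ∈ J_1 × J_2. Let (U_i)_{i≥1} be an infinite sequence of independent random variables, each uniformly distributed on [0,1], and for each N ≥ 1 define d̄_{(N)} = max_{1≤i≤N} Σ_{j=1}^N W(U_i, U_j). Then, almost surely, liminf_{N→∞} d̄_{(N)}/N ≥ η ℓ / 4; combined with the trivial bound d̄_{(N)} ≤ N, this means d̄_{(N)} = Θ(N) almost surely. -/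
open MeasureTheory ProbabilityTheory

/-- If a graphon `W` satisfies `W ≥ η` on a product of two intervals
`J₁ × J₂ ⊆ [0,1]²` of length `ℓ`, and `(U_i)_{i≥1}` is an i.i.d. sequence of uniform
latent variables, then almost surely `liminf_N d̄_{(N)}/N ≥ ηℓ/4`, and (combined with
the trivial bound `d̄_{(N)} ≤ N`) `d̄_{(N)} = Θ(N)` almost surely. -/
theorem max_expected_degree_linear_growth
    -- `W` is a graphon: symmetric, measurable, with values in `[0,1]` on the unit square
    (W : ℝ → ℝ → ℝ)
    (hWmeas : Measurable (Function.uncurry W))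
    (hWsymm : ∀ x y, W x y = W y x)
    (hWrange : ∀ x ∈ Set.Icc (0 : ℝ) 1, ∀ y ∈ Set.Icc (0 : ℝ) 1,
      W x y ∈ Set.Icc (0 : ℝ) 1)
    -- the rectangle `J₁ × J₂` on which `W ≥ η`, with intervals of length `ℓ`
    (η ℓ a₁ a₂ : ℝ) (hη : 0 < η) (hℓ : 0 < ℓ) (hℓ1 : ℓ ≤ 1)
    (hJ₁ : Set.Icc a₁ (a₁ + ℓ) ⊆ Set.Icc (0 : ℝ) 1)
    (hJ₂ : Set.Icc a₂ (a₂ + ℓ) ⊆ Set.Icc (0 : ℝ) 1)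
    (hWη : ∀ x ∈ Set.Icc a₁ (a₁ + ℓ), ∀ y ∈ Set.Icc a₂ (a₂ + ℓ), η ≤ W x y)
    -- the infinite i.i.d. sequence of uniform latent variables
    {Ω : Type} [MeasurableSpace Ω] (P : Measure Ω) [IsProbabilityMeasure P]
    (U : ℕ → Ω → ℝ)
    (hUmeas : ∀ i, Measurable (U i))
    (hUindep : iIndepFun U P)
    (hUlaw : ∀ i, Measure.map (U i) P = volume.restrict (Set.Icc (0 : ℝ) 1))
    -- the maximal expected degree for each `N`
    (dbar : Ω → ℕ → ℝ)
    (hdbar : ∀ ω N, dbar ω N = ⨆ i : Fin N, ∑ j : Fin N, W (U i ω) (U j ω)) :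
    ∀ᵐ ω ∂P,
      η * ℓ / 4 ≤ Filter.liminf (fun N : ℕ => dbar ω N / N) Filter.atTop ∧
      ∀ N : ℕ, dbar ω N ≤ N := by
  -- SLLN for indicators of intervals
  have key : ∀ a : ℝ, Set.Icc a (a + ℓ) ⊆ Set.Icc (0 : ℝ) 1 →
      ∀ᵐ ω ∂P, Filter.Tendsto (fun n : ℕ => (n : ℝ)⁻¹ *
        ∑ i ∈ Finset.range n, (Set.Icc a (a + ℓ)).indicator (fun _ => (1 : ℝ)) (U i ω))
        Filter.atTop (nhds ℓ) := by
    intro a ha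
    set g : ℝ → ℝ := (Set.Icc a (a + ℓ)).indicator (fun _ => (1 : ℝ)) with hgdef
    have hg : Measurable g := measurable_const.indicator measurableSet_Icc
    set X : ℕ → Ω → ℝ := fun k ω => g (U k ω) with hXdef
    have hXeq : ∀ k, X k = (U k ⁻¹' Set.Icc a (a + ℓ)).indicator (fun _ => (1 : ℝ)) := by
      intro k; funext ω
      by_cases h : U k ω ∈ Set.Icc a (a + ℓ) <;>
        simp [hXdef, hgdef, Set.indicator_of_mem, Set.indicator_of_notMem, h]
    have hint : Integrable (X 0) P := by
      rw [hXeq]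
      exact (integrable_const (1 : ℝ)).indicator ((hUmeas 0) measurableSet_Icc)
    have hPJ : P (U 0 ⁻¹' Set.Icc a (a + ℓ)) = ENNReal.ofReal ℓ := by
      rw [← Measure.map_apply (hUmeas 0) measurableSet_Icc, hUlaw 0,
        Measure.restrict_apply measurableSet_Icc,
        Set.inter_eq_self_of_subset_left ha, Real.volume_Icc, add_sub_cancel_left]
    have hmean : ∫ ω, X 0 ω ∂P = ℓ := by
      rw [hXeq, integral_indicator_const (1 : ℝ) ((hUmeas 0) measurableSet_Icc), measureReal_def, hPJ]
      simp [ENNReal.toReal_ofReal hℓ.le]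
    have hident : ∀ i, IdentDistrib (X i) (X 0) P P := fun i =>
      IdentDistrib.comp ⟨(hUmeas i).aemeasurable, (hUmeas 0).aemeasurable,
        by rw [hUlaw i, hUlaw 0]⟩ hg
    have hindep : Pairwise (Function.onFun (IndepFun · · P) X) := fun i j hij =>
      (hUindep.indepFun hij).comp hg hg
    have H := ProbabilityTheory.strong_law_ae X hint hindep hident
    rw [hmean] at H
    filter_upwards [H] with ω hω
    simpa [smul_eq_mul] using hω
  have h1 := key a₁ hJ₁
  have h2 := key a₂ hJ₂
  have h0 : ∀ᵐ ω ∂P, ∀ i, U i ω ∈ Set.Icc (0 : ℝ) 1 := by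
    rw [ae_all_iff]
    intro i
    have hP1 : P (U i ⁻¹' Set.Icc (0 : ℝ) 1) = 1 := by
      rw [← Measure.map_apply (hUmeas i) measurableSet_Icc, hUlaw i,
        Measure.restrict_apply measurableSet_Icc, Set.inter_self, Real.volume_Icc]
      simp
    have hc : P ((U i ⁻¹' Set.Icc (0 : ℝ) 1)ᶜ) = 0 := by
      rw [measure_compl ((hUmeas i) measurableSet_Icc) (measure_ne_top _ _), hP1,
        measure_univ]
      simp
    rw [ae_iff]
    exact hc
  filter_upwards [h1, h2, h0] with ω hT1 hT2 hU
  have hle : ∀ N : ℕ, dbar ω N ≤ N := by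
    intro N
    rw [hdbar]
    rcases Nat.eq_zero_or_pos N with rfl | hN
    · simp [Real.iSup_of_isEmpty]
    · have : Nonempty (Fin N) := Fin.pos_iff_nonempty.mp hN
      apply ciSup_le
      intro i
      calc ∑ j : Fin N, W (U i ω) (U j ω) ≤ ∑ _j : Fin N, (1 : ℝ) :=
            Finset.sum_le_sum fun j _ => (hWrange _ (hU i) _ (hU j)).2
        _ = N := by simp
  refine ⟨?_, hle⟩
  have hcob : Filter.IsCoboundedUnder (· ≥ ·) Filter.atTop
      (fun N : ℕ => dbar ω N / N) := by
    apply Filter.isCoboundedUnder_ge_of_le Filter.atTop (x := 1)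
    intro n
    rcases Nat.eq_zero_or_pos n with rfl | hn
    · simp [hdbar, Real.iSup_of_isEmpty]
    · rw [div_le_one (by exact_mod_cast hn)]
      exact hle n
  apply Filter.le_liminf_of_le hcob
  have e1 := hT1.eventually (eventually_ge_nhds (show ℓ / 2 < ℓ by linarith))
  have e2 := hT2.eventually (eventually_ge_nhds (show ℓ / 2 < ℓ by linarith))
  filter_upwards [e1, e2, Filter.eventually_ge_atTop 1] with n h1n h2n h3n
  have hnpos : (0 : ℝ) < n := by exact_mod_cast h3n
  -- there is an index landing in J₁
  have hS1 : (n : ℝ) * (ℓ / 2) ≤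
      ∑ i ∈ Finset.range n, (Set.Icc a₁ (a₁ + ℓ)).indicator (fun _ => (1 : ℝ)) (U i ω) := by
    have h := mul_le_mul_of_nonneg_left h1n hnpos.le
    rwa [← mul_assoc, mul_inv_cancel₀ hnpos.ne', one_mul] at h
  have hS1pos : (0 : ℝ) <
      ∑ i ∈ Finset.range n, (Set.Icc a₁ (a₁ + ℓ)).indicator (fun _ => (1 : ℝ)) (U i ω) := by
    have : (0 : ℝ) < (n : ℝ) * (ℓ / 2) := by positivity
    linarith
  obtain ⟨i₀, hi₀mem, hi₀⟩ := Finset.exists_ne_zero_of_sum_ne_zero hS1pos.ne'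
  have hi₀J : U i₀ ω ∈ Set.Icc a₁ (a₁ + ℓ) := by
    by_contra h
    exact hi₀ (Set.indicator_of_notMem h _)
  have hi₀lt : i₀ < n := Finset.mem_range.mp hi₀mem
  set S₂ : ℝ := ∑ i ∈ Finset.range n,
    (Set.Icc a₂ (a₂ + ℓ)).indicator (fun _ => (1 : ℝ)) (U i ω) with hS₂def
  have hkey : η * S₂ ≤ dbar ω n := by
    rw [hdbar]
    have hb : BddAbove (Set.range fun i : Fin n => ∑ j : Fin n, W (U i ω) (U j ω)) :=
      Set.Finite.bddAbove (Set.finite_range _)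
    refine le_trans ?_ (le_ciSup hb (⟨i₀, hi₀lt⟩ : Fin n))
    calc η * S₂
        = ∑ j ∈ Finset.range n, η *
            (Set.Icc a₂ (a₂ + ℓ)).indicator (fun _ => (1 : ℝ)) (U j ω) := by
          rw [hS₂def, Finset.mul_sum]
      _ = ∑ j : Fin n, η *
            (Set.Icc a₂ (a₂ + ℓ)).indicator (fun _ => (1 : ℝ)) (U (j : ℕ) ω) :=
          (Fin.sum_univ_eq_sum_range _ n).symm
      _ ≤ ∑ j : Fin n, W (U i₀ ω) (U (j : ℕ) ω) := by
          refine Finset.sum_le_sum fun j _ => ?_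
          by_cases hj : U (j : ℕ) ω ∈ Set.Icc a₂ (a₂ + ℓ)
          · rw [Set.indicator_of_mem hj]
            simpa using hWη _ hi₀J _ hj
          · rw [Set.indicator_of_notMem hj]
            simpa using (hWrange _ (hU i₀) _ (hU j)).1
  have hS2 : ℓ / 2 ≤ (n : ℝ)⁻¹ * S₂ := h2n
  calc η * ℓ / 4 ≤ η * (ℓ / 2) := by nlinarith [mul_pos hη hℓ]
    _ ≤ η * ((n : ℝ)⁻¹ * S₂) := mul_le_mul_of_nonneg_left hS2 hη.le
    _ = (η * S₂) / n := by rw [div_eq_mul_inv]; ring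
    _ ≤ dbar ω n / n := by gcongr
end
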